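/- Let φ ∈ C¹(𝕋, ℝ₊) with φ > 0, H ∈ C³(𝕋 × 𝕋, ℝ), δ ∈ ℝ, and define g_φ(x) = x + δ ∫_𝕋 H(x,y) φ(y)/(∫φ) dy (mod 1). Then the map φ ↦ g_φ is Gateaux differentiable in the C⁰ sense, and for ψ ∈ C¹(𝕋, ℝ) its derivative is Dg_φ(ψ)(x) = δ (1/∫φ) ∫_𝕋 H(x,y) [ψ(y) − φ(y)·(∫ψ)/(∫φ)] dy; moreover x ↦ Dg_φ(ψ)(x) is C³. -/

import Mathlib

open Filter intervalIntegral Real MeasureTheory Metric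

private lemma hasDerivAt_param (F : ℝ → ℝ → ℝ) (hF : ContDiff ℝ 1 (Function.uncurry F))
    (h : ℝ → ℝ) (hh : Continuous h) (x₀ : ℝ) :
    HasDerivAt (fun x => ∫ y in (0:ℝ)..1, F x y * h y)
      (∫ y in (0:ℝ)..1, (fderiv ℝ (Function.uncurry F) (x₀, y) (1, 0)) * h y) x₀ := by
  have hFc : Continuous (Function.uncurry F) := hF.continuous
  have hD : Continuous fun p : ℝ × ℝ => fderiv ℝ (Function.uncurry F) p (1, 0) := by
    exact (ContinuousLinearMap.apply ℝ ℝ ((1 : ℝ), (0 : ℝ))).continuous.comp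
      (hF.continuous_fderiv one_ne_zero)
  obtain ⟨C, hC⟩ := (IsCompact.prod (isCompact_closedBall x₀ 1)
      (isCompact_uIcc (a := (0:ℝ)) (b := 1))).exists_bound_of_continuousOn
    ((hD.mul (hh.comp continuous_snd)).continuousOn)
  refine (intervalIntegral.hasDerivAt_integral_of_dominated_loc_of_deriv_le
    (F := fun x y => F x y * h y)
    (F' := fun x y => fderiv ℝ (Function.uncurry F) (x, y) (1, 0) * h y)
    (bound := fun _ => C) (ball_mem_nhds x₀ one_pos) ?_ ?_ ?_ ?_ ?_ ?_).2
  · filter_upwards with x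
    exact (((by exact hFc.comp (continuous_const.prodMk continuous_id) :
      Continuous fun y => F x y)).mul hh).aestronglyMeasurable
  · exact (((by exact hFc.comp (continuous_const.prodMk continuous_id) :
      Continuous fun y => F x₀ y)).mul hh).intervalIntegrable 0 1
  · exact (((by exact hD.comp (continuous_const.prodMk continuous_id) :
      Continuous fun y => fderiv ℝ (Function.uncurry F) (x₀, y) (1, 0))).mul
        hh).aestronglyMeasurable
  · filter_upwards with t ht x hx
    exact hC (x, t) ⟨ball_subset_closedBall hx, Set.uIoc_subset_uIcc ht⟩
  · exact intervalIntegrable_const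
  · filter_upwards with t _ x _
    have h1 : HasDerivAt (fun x : ℝ => (x, t)) ((1 : ℝ), (0 : ℝ)) x :=
      (hasDerivAt_id x).prodMk (hasDerivAt_const x t)
    have h2 : HasFDerivAt (Function.uncurry F) (fderiv ℝ (Function.uncurry F) (x, t)) (x, t) :=
      ((hF.differentiable one_ne_zero) (x, t)).hasFDerivAt
    exact (h2.comp_hasDerivAt x h1).mul_const (h t)

private lemma contDiff_param (n : ℕ) : ∀ (F : ℝ → ℝ → ℝ), ContDiff ℝ n (Function.uncurry F) →
    ∀ (h : ℝ → ℝ), Continuous h → ContDiff ℝ n (fun x => ∫ y in (0:ℝ)..1, F x y * h y) := by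
  induction n with
  | zero =>
    intro F hF h hh
    have : Continuous (fun x => ∫ y in (0:ℝ)..1, F x y * h y) :=
      continuous_parametric_intervalIntegral_of_continuous' (f := fun x y => F x y * h y)
        (μ := volume) (by exact hF.continuous.mul (hh.comp continuous_snd)) 0 1
    simpa [contDiff_zero] using this
  | succ n ih =>
    intro F hF h hh
    have hF1 : ContDiff ℝ 1 (Function.uncurry F) := hF.of_le (by exact_mod_cast Nat.succ_le_succ (Nat.zero_le n))
    have key : ∀ x₀, HasDerivAt (fun x => ∫ y in (0:ℝ)..1, F x y * h y)
        (∫ y in (0:ℝ)..1, (fderiv ℝ (Function.uncurry F) (x₀, y) (1, 0)) * h y) x₀ :=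
      hasDerivAt_param F hF1 h hh
    have hderiv : deriv (fun x => ∫ y in (0:ℝ)..1, F x y * h y) =
        fun x₀ => ∫ y in (0:ℝ)..1, (fderiv ℝ (Function.uncurry F) (x₀, y) (1, 0)) * h y :=
      funext fun x₀ => (key x₀).deriv
    have main : ContDiff ℝ ((n : WithTop ℕ∞) + 1) (fun x => ∫ y in (0:ℝ)..1, F x y * h y) := by
      rw [contDiff_succ_iff_deriv]
      refine ⟨fun x => (key x).differentiableAt, by simp, ?_⟩
      rw [hderiv]
      refine ih (fun x y => fderiv ℝ (Function.uncurry F) (x, y) (1, 0)) ?_ h hh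
      exact ((ContinuousLinearMap.apply ℝ ℝ ((1 : ℝ), (0 : ℝ))).contDiff).comp
          (hF.fderiv_right (by exact_mod_cast le_rfl))
    exact_mod_cast main

theorem stmt5 (δ : ℝ) (H : ℝ → ℝ → ℝ) (φ ψ : ℝ → ℝ)
    (hφpos : ∀ x, 0 < φ x) (hφ : ContDiff ℝ 1 φ) (hψ : ContDiff ℝ 1 ψ)
    (hφper : Function.Periodic φ 1) (hψper : Function.Periodic ψ 1)
    (hH : ContDiff ℝ 3 (Function.uncurry H))
    (hHperx : ∀ x y, H (x + 1) y = H x y) (hHpery : ∀ x y, H x (y + 1) = H x y)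
    (hφint : 0 < ∫ y in (0:ℝ)..1, φ y) :
    TendstoUniformly
      (fun s : ℝ => fun x : ℝ =>
        ((x + δ * (∫ y in (0:ℝ)..1, H x y * (φ y + s * ψ y)) /
            (∫ y in (0:ℝ)..1, (φ y + s * ψ y))) -
          (x + δ * (∫ y in (0:ℝ)..1, H x y * φ y) / (∫ y in (0:ℝ)..1, φ y))) / s)
      (fun x : ℝ => δ * (∫ y in (0:ℝ)..1, φ y)⁻¹ *
        ∫ y in (0:ℝ)..1, H x y *
          (ψ y - φ y * (∫ z in (0:ℝ)..1, ψ z) / (∫ z in (0:ℝ)..1, φ z)))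
      (nhdsWithin (0 : ℝ) {(0 : ℝ)}ᶜ)
    ∧ ContDiff ℝ 3
      (fun x : ℝ => δ * (∫ y in (0:ℝ)..1, φ y)⁻¹ *
        ∫ y in (0:ℝ)..1, H x y *
          (ψ y - φ y * (∫ z in (0:ℝ)..1, ψ z) / (∫ z in (0:ℝ)..1, φ z))) := by
  have hφc : Continuous φ := hφ.continuous
  have hψc : Continuous ψ := hψ.continuous
  have hHc : Continuous (Function.uncurry H) := hH.continuous
  have hHx : ∀ x, Continuous fun y => H x y := fun x => by
    exact hHc.comp (continuous_const.prodMk continuous_id)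
  set A : ℝ := ∫ y in (0:ℝ)..1, φ y with hA
  set B : ℝ := ∫ y in (0:ℝ)..1, ψ y with hB
  have hA0 : A ≠ 0 := ne_of_gt hφint
  set h : ℝ → ℝ := fun y => ψ y - φ y * B / A with hh
  have hhc : Continuous h := hψc.sub ((hφc.mul continuous_const).div_const A)
  set Fi : ℝ → ℝ := fun x => ∫ y in (0:ℝ)..1, H x y * φ y with hFi
  set Gi : ℝ → ℝ := fun x => ∫ y in (0:ℝ)..1, H x y * ψ y with hGi
  set g : ℝ → ℝ := fun x => δ * A⁻¹ * ∫ y in (0:ℝ)..1, H x y * h y with hg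
  have intφ : ∀ x, IntervalIntegrable (fun y => H x y * φ y) volume 0 1 :=
    fun x => ((hHx x).mul hφc).intervalIntegrable 0 1
  have intψ : ∀ x, IntervalIntegrable (fun y => H x y * ψ y) volume 0 1 :=
    fun x => ((hHx x).mul hψc).intervalIntegrable 0 1
  have keyg : ∀ x, g x = δ * A⁻¹ * (Gi x - Fi x * B / A) := by
    intro x
    have e : (∫ y in (0:ℝ)..1, H x y * h y) = Gi x - Fi x * (B / A) := by
      have e1 : (∫ y in (0:ℝ)..1, H x y * h y)
          = ∫ y in (0:ℝ)..1, (H x y * ψ y - (H x y * φ y) * (B / A)) := by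
        apply intervalIntegral.integral_congr
        intro y _
        simp only [hh]; ring
      rw [e1, intervalIntegral.integral_sub (intψ x) ((intφ x).mul_const _),
        intervalIntegral.integral_mul_const]
    rw [hg]; dsimp only; rw [e]; ring
  have hC3 : ContDiff ℝ 3 g :=
    contDiff_const.mul (contDiff_param 3 H hH h hhc)
  refine ⟨?_, hC3⟩
  have hgc : Continuous g := continuous_const.mul
    (continuous_parametric_intervalIntegral_of_continuous' (f := fun x y => H x y * h y)
      (μ := volume) (by exact hHc.mul (hhc.comp continuous_snd)) 0 1)
  have hgper : Function.Periodic g 1 := by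
    intro x
    have e : (∫ y in (0:ℝ)..1, H (x + 1) y * h y) = ∫ y in (0:ℝ)..1, H x y * h y := by
      apply intervalIntegral.integral_congr
      intro y _
      show H (x + 1) y * h y = H x y * h y
      rw [hHperx]
    simp only [hg]; rw [e]
  obtain ⟨M, hM⟩ := (isCompact_Icc (a := (0:ℝ)) (b := 1)).exists_bound_of_continuousOn
    hgc.continuousOn
  have hMg : ∀ x, |g x| ≤ M := by
    intro x
    obtain ⟨y, hy, hxy⟩ := hgper.exists_mem_Ico₀ one_pos x
    rw [hxy]
    exact hM y ⟨hy.1, hy.2.le⟩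
  have hM0 : 0 ≤ M := le_trans (abs_nonneg _) (hMg 0)
  have comp1 : ∀ s x, (∫ y in (0:ℝ)..1, H x y * (φ y + s * ψ y)) = Fi x + s * Gi x := by
    intro s x
    have e1 : (∫ y in (0:ℝ)..1, H x y * (φ y + s * ψ y))
        = ∫ y in (0:ℝ)..1, (H x y * φ y + s * (H x y * ψ y)) := by
      apply intervalIntegral.integral_congr
      intro y _; ring
    rw [e1, intervalIntegral.integral_add (intφ x) ((intψ x).const_mul s),
      intervalIntegral.integral_const_mul]
  have comp2 : ∀ s : ℝ, (∫ y in (0:ℝ)..1, (φ y + s * ψ y)) = A + s * B := by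
    intro s
    rw [intervalIntegral.integral_add (hφc.intervalIntegrable 0 1)
      ((hψc.intervalIntegrable 0 1).const_mul s), intervalIntegral.integral_const_mul]
  have t1 : Tendsto (fun s : ℝ => A + s * B) (nhds 0) (nhds A) := by
    have hc : Continuous (fun s : ℝ => A + s * B) := by fun_prop
    have := hc.tendsto (0 : ℝ)
    simpa using this
  have t2 : Tendsto (fun s : ℝ => A / (A + s * B)) (nhds 0) (nhds 1) := by
    have := (tendsto_const_nhds (x := A)).div t1 hA0
    rw [div_self hA0] at this; exact this
  rw [Metric.tendstoUniformly_iff]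
  intro ε hε
  have hεM : 0 < ε / (M + 1) := div_pos hε (by linarith)
  have e1 : ∀ᶠ s : ℝ in nhds 0, A + s * B ≠ 0 := t1.eventually_ne hA0
  have e2 : ∀ᶠ s : ℝ in nhds 0, |A / (A + s * B) - 1| < ε / (M + 1) := by
    have := Metric.tendsto_nhds.mp t2 _ hεM
    simpa [Real.dist_eq] using this
  have e3 : ∀ᶠ s : ℝ in nhdsWithin (0:ℝ) {(0:ℝ)}ᶜ, s ≠ 0 := by
    filter_upwards [self_mem_nhdsWithin] with s hs using hs
  filter_upwards [(e1.and e2).filter_mono nhdsWithin_le_nhds, e3] with s hs hs0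
  obtain ⟨hsA, hsε⟩ := hs
  intro x
  have hqx : ((x + δ * (∫ y in (0:ℝ)..1, H x y * (φ y + s * ψ y)) /
        (∫ y in (0:ℝ)..1, (φ y + s * ψ y))) -
      (x + δ * (∫ y in (0:ℝ)..1, H x y * φ y) / (∫ y in (0:ℝ)..1, φ y))) / s
      = g x * (A / (A + s * B)) := by
    rw [comp1 s x, comp2 s, keyg x]
    rw [← hA, show (∫ y in (0:ℝ)..1, H x y * φ y) = Fi x from rfl]
    field_simp
    ring
  rw [hqx]
  show dist (g x) (g x * (A / (A + s * B))) < ε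
  have habs : |g x - g x * (A / (A + s * B))| = |g x| * |A / (A + s * B) - 1| := by
    rw [abs_sub_comm, ← abs_mul]
    congr 1
    ring
  rw [Real.dist_eq, habs]
  calc |g x| * |A / (A + s * B) - 1| ≤ M * (ε / (M + 1)) :=
        mul_le_mul (hMg x) hsε.le (abs_nonneg _) hM0
    _ < ε := by
        rw [div_eq_inv_mul, ← mul_assoc]
        have hlt : M * (M + 1)⁻¹ < 1 := by
          rw [mul_inv_lt_iff₀ (by linarith)]; linarith
        nlinarith
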